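/- Let b ∈ ℂ and let f : ℝ^n → ℂ be an infinitely differentiable function of temperate growth (f and each of its iterated derivatives is bounded by a polynomial) satisfying f(sx) = s^b·f(x) for all s > 0 and all x ∈ ℝ^n, where s^b = exp(b·log s). Let u be a tempered distribution on ℝ^n that is weakly homogeneous of degree a ∈ ℝ. Then the tempered distribution f·u, defined by (f·u)(φ) = u(f·φ) (note f·φ is Schwartz since f has temperate growth), is weakly homogeneous of degree a + Re(b): for every Schwartz φ there exists C > 0 with |(f·u)(φ_s)| ≤ C·s^(a + Re(b)) for all s > 0. -/

import Mathlib

/-- A tempered distribution `w` on `ℝ^n` is weakly homogeneous of degree `a` (`w ∈ E^a`) if for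
every Schwartz `φ` there is `C > 0` with `|w(φ_s)| ≤ C s^a` for all `s > 0`, where
`φ_s(x) = φ(s⁻¹x)`. -/
def WeaklyHomogeneous (n : ℕ) (w : SchwartzMap (Fin n → ℝ) ℂ →L[ℂ] ℂ) (a : ℝ) : Prop :=
  ∀ φ : SchwartzMap (Fin n → ℝ) ℂ, ∃ C : ℝ, 0 < C ∧
    ∀ s : ℝ, 0 < s → ∀ φs : SchwartzMap (Fin n → ℝ) ℂ,
      (∀ x, φs x = φ (s⁻¹ • x)) → ‖w φs‖ ≤ C * s ^ a

/-- If `f : ℝ^n → ℂ` is a smooth function of temperate growth which is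
homogeneous of degree `b ∈ ℂ` for dilations (`f(sx) = s^b f(x)` for `s > 0`), and `u` is a
tempered distribution weakly homogeneous of degree `a ∈ ℝ`, then `f·u`, given by
`(f·u)(φ) = u(f·φ)`, is weakly homogeneous of degree `a + Re(b)`. -/
theorem stmt_12 (n : ℕ) (b : ℂ) (f : (Fin n → ℝ) → ℂ)
    (hf : Function.HasTemperateGrowth f)
    (hfhom : ∀ s : ℝ, 0 < s → ∀ x : Fin n → ℝ, f (s • x) = (s : ℂ) ^ b * f x)
    (a : ℝ) (u : SchwartzMap (Fin n → ℝ) ℂ →L[ℂ] ℂ)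
    (hu : WeaklyHomogeneous n u a) :
    ∀ φ : SchwartzMap (Fin n → ℝ) ℂ, ∃ C : ℝ, 0 < C ∧
      ∀ s : ℝ, 0 < s → ∀ χ : SchwartzMap (Fin n → ℝ) ℂ,
        (∀ x, χ x = f x * φ (s⁻¹ • x)) → ‖u χ‖ ≤ C * s ^ (a + b.re) := by
  intro φ
  -- ψ = f · φ as a Schwartz function
  set ψ : SchwartzMap (Fin n → ℝ) ℂ :=
    SchwartzMap.bilinLeftCLM (ContinuousLinearMap.mul ℝ ℂ) hf φ with hψ
  obtain ⟨C, hC, hCle⟩ := hu ψ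
  refine ⟨C, hC, ?_⟩
  intro s hs χ hχ
  have hs0 : (s : ℂ) ≠ 0 := by exact_mod_cast ne_of_gt hs
  have hsb : ((s : ℂ) ^ b) ≠ 0 := by
    simp [Complex.cpow_eq_zero_iff, hs0]
  -- φs = (s^b)⁻¹ • χ  satisfies  φs x = ψ (s⁻¹ • x)
  have key : ∀ x, (((s : ℂ) ^ b)⁻¹ • χ) x = ψ (s⁻¹ • x) := by
    intro x
    have h1 : f x = (s : ℂ) ^ b * f (s⁻¹ • x) := by
      have := hfhom s hs (s⁻¹ • x)
      rwa [smul_smul, mul_inv_cancel₀ (ne_of_gt hs), one_smul] at this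
    have hψx : ψ (s⁻¹ • x) = φ (s⁻¹ • x) * f (s⁻¹ • x) := rfl
    simp only [SchwartzMap.smul_apply, hχ x, smul_eq_mul, h1, hψx]
    field_simp
  have hle := hCle s hs (((s : ℂ) ^ b)⁻¹ • χ) key
  have habs : ‖(s : ℂ) ^ b‖ = s ^ b.re := by
    rw [Complex.norm_cpow_eq_rpow_re_of_pos hs]
  have huχ : u χ = (s : ℂ) ^ b * u (((s : ℂ) ^ b)⁻¹ • χ) := by
    rw [map_smul, smul_eq_mul, ← mul_assoc, mul_inv_cancel₀ hsb, one_mul]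
  rw [huχ, norm_mul, habs, Real.rpow_add hs]
  calc s ^ b.re * ‖u (((s : ℂ) ^ b)⁻¹ • χ)‖ ≤ s ^ b.re * (C * s ^ a) :=
        mul_le_mul_of_nonneg_left hle (Real.rpow_nonneg hs.le _)
    _ = C * (s ^ a * s ^ b.re) := by ring
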